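/- Let ρ(ζ,τ) be the crystal-corner density profile with facet edge b_∞(τ) = −2ln(1−e^{-|τ|/2}). Then for fixed τ ≠ 0, as ζ → b_∞(τ)⁻, one has ρ(ζ,τ) ~ (1/π)·√(e^{-b_∞(τ)+|τ|/2}·(b_∞(τ) − ζ)) up to a multiplicative error tending to 1; in particular ρ vanishes like a square root at the facet edge, so the integrated height h(r) = ∫ over a distance r inside the edge of ρ vanishes like r^{3/2} (the Pokrovsky–Talapov law). -/

import Mathlib

open Filter Set

lemma slope_exp : Tendsto (fun u : ℝ => (Real.exp u - 1) / u) (nhdsWithin 0 (Set.Ioi 0)) (nhds 1) := by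
  have h := (Real.hasDerivAt_exp 0)
  rw [hasDerivAt_iff_tendsto_slope] at h
  have h2 : Tendsto (slope Real.exp 0) (nhdsWithin 0 (Set.Ioi 0)) (nhds (Real.exp 0)) :=
    h.mono_left (nhdsWithin_mono _ (fun x hx => ne_of_gt hx))
  simp only [Real.exp_zero] at h2
  refine h2.congr (fun u => ?_)
  simp [slope_def_field]

lemma slope_sin : Tendsto (fun u : ℝ => Real.sin u / u) (nhdsWithin 0 (Set.Ioi 0)) (nhds 1) := by
  have h := (Real.hasDerivAt_sin 0)
  rw [hasDerivAt_iff_tendsto_slope] at h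
  have h2 : Tendsto (slope Real.sin 0) (nhdsWithin 0 (Set.Ioi 0)) (nhds (Real.cos 0)) :=
    h.mono_left (nhdsWithin_mono _ (fun x hx => ne_of_gt hx))
  simp only [Real.cos_zero] at h2
  refine h2.congr (fun u => ?_)
  simp [slope_def_field]

lemma theta_lim : Tendsto (fun θ : ℝ => θ / (2 * Real.sin (θ / 2))) (nhdsWithin 0 (Set.Ioi 0)) (nhds 1) := by
  have hhalf : Tendsto (fun θ : ℝ => θ / 2) (nhdsWithin 0 (Set.Ioi 0)) (nhdsWithin 0 (Set.Ioi 0)) := by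
    rw [tendsto_nhdsWithin_iff]
    constructor
    · exact ((continuous_id.div_const 2).tendsto 0).mono_left nhdsWithin_le_nhds |>.congr (by simp) |>.mono_right (by simp)
    · exact eventually_nhdsWithin_of_forall (fun x hx => Set.mem_Ioi.2 (div_pos (Set.mem_Ioi.1 hx) two_pos))
  have := (slope_sin.comp hhalf).inv₀ one_ne_zero
  simp only [inv_one] at this
  refine this.congr (fun θ => ?_)
  simp only [Function.comp_apply, inv_div]
  rw [div_div]

lemma arccos_lim : Tendsto (fun x : ℝ => Real.arccos (1 - x) / Real.sqrt (2 * x))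
    (nhdsWithin 0 (Set.Ioi 0)) (nhds 1) := by
  have harc : Tendsto (fun x : ℝ => Real.arccos (1 - x)) (nhdsWithin 0 (Set.Ioi 0))
      (nhdsWithin 0 (Set.Ioi 0)) := by
    rw [tendsto_nhdsWithin_iff]
    constructor
    · have hc : Continuous fun x : ℝ => Real.arccos (1 - x) :=
        Real.continuous_arccos.comp (continuous_const.sub continuous_id)
      have := (hc.tendsto 0).mono_left (nhdsWithin_le_nhds (s := Set.Ioi (0:ℝ)))
      simpa using this
    · exact eventually_nhdsWithin_of_forall fun x hx =>
        Real.arccos_pos.2 (by simp only [mem_Ioi] at hx; linarith)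
  have hcomp := theta_lim.comp harc
  refine hcomp.congr' ?_
  filter_upwards [Ioo_mem_nhdsGT_of_mem (left_mem_Ico.2 (by norm_num : (0:ℝ) < 2))] with x hx
  obtain ⟨hx0, hx2⟩ := hx
  set θ := Real.arccos (1 - x) with hθ
  have hθ0 : 0 ≤ θ := Real.arccos_nonneg _
  have hθpi : θ ≤ Real.pi := Real.arccos_le_pi _
  have hsqrt : Real.sqrt (2 * x) = 2 * Real.sin (θ / 2) := by
    rw [Real.sin_half_eq_sqrt hθ0 (by linarith [Real.pi_pos]),
      Real.cos_arccos (by linarith) (by linarith)]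
    rw [show (1:ℝ) - (1 - x) = x by ring]
    rw [show (2:ℝ) * x = 4 * (x / 2) by ring,
      Real.sqrt_mul (by norm_num) (x / 2),
      show Real.sqrt 4 = 2 by rw [show (4:ℝ) = 2^2 by norm_num, Real.sqrt_sq two_pos.le]]
  simp only [Function.comp_apply, hsqrt]
  rfl

noncomputable def bInfMinus (τ : ℝ) : ℝ := -2 * Real.log (1 + Real.exp (-|τ| / 2))
noncomputable def bInf (τ : ℝ) : ℝ := -2 * Real.log (1 - Real.exp (-|τ| / 2))

/-- The density profile `ρ(ζ,τ)` of the crystal corner. -/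
noncomputable def rho (ζ τ : ℝ) : ℝ :=
  if ζ ≤ bInfMinus τ then 1
  else if ζ < bInf τ then
    (1 / Real.pi) * Real.arccos (Real.cosh (τ / 2) - Real.exp (-ζ + |τ| / 2) / 2)
  else 0

lemma s_lt_one {τ : ℝ} (hτ : τ ≠ 0) : Real.exp (-|τ| / 2) < 1 := by
  rw [Real.exp_lt_one_iff]
  have := abs_pos.2 hτ
  linarith

lemma key_cosh (τ : ℝ) (hτ : τ ≠ 0) :
    Real.cosh (τ / 2) = 1 + Real.exp (-(bInf τ) + |τ| / 2) / 2 := by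
  have hs : (0:ℝ) < Real.exp (-|τ| / 2) := Real.exp_pos _
  have hs1 := s_lt_one hτ
  set s := Real.exp (-|τ| / 2) with hsdef
  have ht : (0:ℝ) < 1 - s := by linarith
  have hb : Real.exp (-(bInf τ)) = (1 - s) ^ 2 := by
    rw [bInf, ← hsdef, show -(-2 * Real.log (1 - s)) = Real.log (1 - s) + Real.log (1 - s) by ring,
      Real.exp_add, Real.exp_log ht, sq]
  have hinv : Real.exp (|τ| / 2) = 1 / s := by
    rw [eq_div_iff (ne_of_gt hs), hsdef, ← Real.exp_add,
      show |τ| / 2 + -|τ| / 2 = 0 by ring, Real.exp_zero]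
  have habs : Real.cosh (τ / 2) = (Real.exp (|τ| / 2) + s) / 2 := by
    rw [← Real.cosh_abs, abs_div, abs_two, Real.cosh_eq, hsdef,
      show -(|τ| / 2) = -|τ| / 2 by ring]
  rw [habs, Real.exp_add, hb, hinv]
  field_simp
  ring

lemma bInfMinus_lt_bInf {τ : ℝ} (hτ : τ ≠ 0) : bInfMinus τ < bInf τ := by
  have hs : (0:ℝ) < Real.exp (-|τ| / 2) := Real.exp_pos _
  have hs1 := s_lt_one hτ
  have h := Real.log_lt_log (by linarith : (0:ℝ) < 1 - Real.exp (-|τ| / 2))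
    (by linarith : 1 - Real.exp (-|τ| / 2) < 1 + Real.exp (-|τ| / 2))
  rw [bInfMinus, bInf]
  linarith

lemma rho_eq (τ : ℝ) (hτ : τ ≠ 0) {ζ : ℝ} (hζ : ζ ∈ Set.Ioo (bInfMinus τ) (bInf τ)) :
    rho ζ τ = (1 / Real.pi) *
      Real.arccos (1 - Real.exp (-(bInf τ) + |τ| / 2) / 2 * (Real.exp (bInf τ - ζ) - 1)) := by
  rw [rho, if_neg (not_le.2 hζ.1), if_pos hζ.2]
  have hce : Real.exp (-(bInf τ) + |τ| / 2) * Real.exp (bInf τ - ζ) = Real.exp (-ζ + |τ| / 2) := by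
    rw [← Real.exp_add]; congr 1; ring
  have harg : Real.cosh (τ / 2) - Real.exp (-ζ + |τ| / 2) / 2 =
      1 - Real.exp (-(bInf τ) + |τ| / 2) / 2 * (Real.exp (bInf τ - ζ) - 1) := by
    rw [key_cosh τ hτ]
    linear_combination (1/2 : ℝ) * hce
  rw [harg]

lemma partA (τ : ℝ) (hτ : τ ≠ 0) :
    Tendsto
      (fun ζ => rho ζ τ /
        ((1 / Real.pi) * Real.sqrt (Real.exp (-bInf τ + |τ| / 2) * (bInf τ - ζ))))
      (nhdsWithin (bInf τ) (Set.Iio (bInf τ))) (nhds 1) := by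
  have hπ := Real.pi_pos
  set b := bInf τ with hbdef
  set c := Real.exp (-b + |τ| / 2) with hcdef
  have hc : 0 < c := Real.exp_pos _
  have hmlt := bInfMinus_lt_bInf hτ
  -- limits
  have hbu : Tendsto (fun ζ : ℝ => b - ζ) (nhdsWithin b (Set.Iio b)) (nhdsWithin 0 (Set.Ioi 0)) := by
    rw [tendsto_nhdsWithin_iff]
    constructor
    · have hcont : Continuous fun ζ : ℝ => b - ζ := by fun_prop
      have := (hcont.tendsto b).mono_left (nhdsWithin_le_nhds (s := Set.Iio b))
      simpa using this
    · exact eventually_nhdsWithin_of_forall fun ζ hζ => by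
        simp only [Set.mem_Iio] at hζ; simp only [Set.mem_Ioi]; linarith
  have hx : Tendsto (fun ζ : ℝ => c / 2 * (Real.exp (b - ζ) - 1))
      (nhdsWithin b (Set.Iio b)) (nhdsWithin 0 (Set.Ioi 0)) := by
    rw [tendsto_nhdsWithin_iff]
    constructor
    · have hcont : Continuous fun ζ : ℝ => c / 2 * (Real.exp (b - ζ) - 1) := by fun_prop
      have := (hcont.tendsto b).mono_left (nhdsWithin_le_nhds (s := Set.Iio b))
      simpa using this
    · refine eventually_nhdsWithin_of_forall fun ζ hζ => ?_
      simp only [Set.mem_Iio] at hζ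
      have h1 : (1:ℝ) < Real.exp (b - ζ) := by
        rw [show (1:ℝ) = Real.exp 0 by simp]
        exact Real.exp_lt_exp.2 (by linarith)
      simp only [Set.mem_Ioi]
      nlinarith
  have hG := arccos_lim.comp hx
  have hH' := slope_exp.comp hbu
  have hH : Tendsto (fun ζ : ℝ => Real.sqrt ((Real.exp (b - ζ) - 1) / (b - ζ)))
      (nhdsWithin b (Set.Iio b)) (nhds 1) := by
    have := (Real.continuous_sqrt.tendsto 1).comp hH'
    simpa [Function.comp_def] using this
  have hmul := hG.mul hH
  rw [one_mul] at hmul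
  refine hmul.congr' ?_
  filter_upwards [Ioo_mem_nhdsLT_of_mem (Set.right_mem_Ioc.2 hmlt)] with ζ hζ
  obtain ⟨hζ1, hζ2⟩ := hζ
  have hu : 0 < b - ζ := by linarith
  have hE : 0 < Real.exp (b - ζ) - 1 := by
    have : (1:ℝ) < Real.exp (b - ζ) := by
      rw [show (1:ℝ) = Real.exp 0 by simp]
      exact Real.exp_lt_exp.2 (by linarith)
    linarith
  have hxpos : 0 < c / 2 * (Real.exp (b - ζ) - 1) := by positivity
  rw [rho_eq τ hτ ⟨hζ1, hζ2⟩, ← hbdef, ← hcdef]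
  simp only [Function.comp_apply]
  have h2x : 2 * (c / 2 * (Real.exp (b - ζ) - 1)) = c * (Real.exp (b - ζ) - 1) := by ring
  rw [h2x]
  rw [Real.sqrt_div hE.le, Real.sqrt_mul hc.le, Real.sqrt_mul hc.le]
  have hsc : 0 < Real.sqrt c := Real.sqrt_pos.2 hc
  have hsu : 0 < Real.sqrt (b - ζ) := Real.sqrt_pos.2 hu
  have hsE : 0 < Real.sqrt (Real.exp (b - ζ) - 1) := Real.sqrt_pos.2 hE
  field_simp

lemma integral_sqrt_edge (b cc r : ℝ) (hcc : 0 ≤ cc) (hr : 0 ≤ r) :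
    ∫ ζ in Set.Ioo (b - r) b, Real.sqrt (cc * (b - ζ)) =
      Real.sqrt cc * ((2 / 3) * r ^ ((3 : ℝ) / 2)) := by
  rw [← MeasureTheory.integral_Ioc_eq_integral_Ioo,
    ← intervalIntegral.integral_of_le (by linarith : b - r ≤ b)]
  simp only [Real.sqrt_mul hcc]
  rw [intervalIntegral.integral_const_mul]
  rw [intervalIntegral.integral_comp_sub_left (fun x => Real.sqrt x) b]
  simp only [sub_self, sub_sub_cancel]
  simp only [Real.sqrt_eq_rpow]
  rw [integral_rpow (Or.inl (by norm_num))]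
  rw [Real.zero_rpow (by norm_num), show (1:ℝ)/2 + 1 = 3/2 by norm_num]
  ring

lemma rho_nonneg (ζ τ : ℝ) : 0 ≤ rho ζ τ := by
  rw [rho]
  split_ifs
  · norm_num
  · have := Real.arccos_nonneg (Real.cosh (τ / 2) - Real.exp (-ζ + |τ| / 2) / 2)
    have hπ := Real.pi_pos
    positivity
  · exact le_refl 0

lemma measurable_rho (τ : ℝ) : Measurable fun ζ => rho ζ τ := by
  unfold rho
  refine Measurable.ite (measurableSet_Iic (a := bInfMinus τ)) measurable_const ?_
  refine Measurable.ite (measurableSet_Iio (a := bInf τ)) ?_ measurable_const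
  have : Continuous fun ζ : ℝ => (1 / Real.pi) *
      Real.arccos (Real.cosh (τ / 2) - Real.exp (-ζ + |τ| / 2) / 2) :=
    continuous_const.mul (Real.continuous_arccos.comp (by fun_prop))
  exact this.measurable

lemma rho_le_one (ζ τ : ℝ) : rho ζ τ ≤ 1 := by
  rw [rho]
  have hπ := Real.pi_pos
  split_ifs
  · exact le_refl 1
  · have h1 := Real.arccos_le_pi (Real.cosh (τ / 2) - Real.exp (-ζ + |τ| / 2) / 2)
    rw [div_mul_eq_mul_div, one_mul, div_le_one hπ]
    exact h1
  · norm_num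

/-- Pokrovsky–Talapov law: for fixed `τ ≠ 0`, as `ζ → b_∞(τ)⁻`,
`ρ(ζ,τ) ~ (1/π) √(e^{-b_∞(τ)+|τ|/2} (b_∞(τ) - ζ))`, i.e. the density vanishes like a
square root at the facet edge; in particular the integrated height
`h(r) = ∫_{b_∞(τ)-r}^{b_∞(τ)} ρ` vanishes like `r^{3/2}`. -/
theorem rho_edge_asymptotics (τ : ℝ) (hτ : τ ≠ 0) :
    Tendsto
      (fun ζ => rho ζ τ /
        ((1 / Real.pi) * Real.sqrt (Real.exp (-bInf τ + |τ| / 2) * (bInf τ - ζ))))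
      (nhdsWithin (bInf τ) (Set.Iio (bInf τ))) (nhds 1) ∧
    Tendsto
      (fun r : ℝ => (∫ ζ in Set.Ioo (bInf τ - r) (bInf τ), rho ζ τ) / r ^ ((3 : ℝ) / 2))
      (nhdsWithin 0 (Set.Ioi (0 : ℝ)))
      (nhds ((2 / (3 * Real.pi)) * Real.sqrt (Real.exp (-bInf τ + |τ| / 2)))) := by
  have hA := partA τ hτ
  refine ⟨hA, ?_⟩
  have hπ := Real.pi_pos
  set b := bInf τ with hbdef
  set c := Real.exp (-b + |τ| / 2) with hcdef
  have hc : 0 < c := Real.exp_pos _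
  have hsc : 0 < Real.sqrt c := Real.sqrt_pos.2 hc
  set K : ℝ := 2 / (3 * Real.pi) * Real.sqrt c with hKdef
  have hKpos : 0 < K := by rw [hKdef]; positivity
  rw [Metric.tendsto_nhdsWithin_nhds]
  intro ε hε
  set ε' := ε / (2 * K) with hε'def
  have hε' : 0 < ε' := by rw [hε'def]; positivity
  have hev : ∀ᶠ ζ in nhdsWithin b (Set.Iio b),
      |rho ζ τ / (1 / Real.pi * Real.sqrt (c * (b - ζ))) - 1| < ε' := by
    have h2 := Metric.tendsto_nhds.1 hA ε' hε'
    filter_upwards [h2] with ζ h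
    rwa [Real.dist_eq] at h
  obtain ⟨a₀, ha₀, hsub⟩ := mem_nhdsLT_iff_exists_Ioo_subset.1 hev
  rw [Set.mem_Iio] at ha₀
  refine ⟨b - a₀, by linarith, ?_⟩
  intro r hr hdist
  rw [Set.mem_Ioi] at hr
  rw [Real.dist_eq, sub_zero, abs_of_pos hr] at hdist
  have hR : 0 < r ^ ((3 : ℝ) / 2) := Real.rpow_pos_of_pos hr _
  have hIf : ∫ ζ in Set.Ioo (b - r) b, 1 / Real.pi * Real.sqrt (c * (b - ζ))
      = K * r ^ ((3 : ℝ) / 2) := by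
    rw [MeasureTheory.integral_const_mul, integral_sqrt_edge b c r hc.le hr.le, hKdef]
    ring
  have hcontf : Continuous fun ζ : ℝ => 1 / Real.pi * Real.sqrt (c * (b - ζ)) :=
    continuous_const.mul (Real.continuous_sqrt.comp (by fun_prop))
  have hint_f : MeasureTheory.IntegrableOn
      (fun ζ : ℝ => 1 / Real.pi * Real.sqrt (c * (b - ζ))) (Set.Ioo (b - r) b) :=
    (hcontf.integrableOn_Icc).mono_set Set.Ioo_subset_Icc_self
  have hint_rho : MeasureTheory.IntegrableOn (fun ζ => rho ζ τ) (Set.Ioo (b - r) b) := by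
    refine MeasureTheory.Integrable.mono' (g := fun _ => (1 : ℝ)) ?_
      ((measurable_rho τ).aestronglyMeasurable) ?_
    · exact MeasureTheory.integrableOn_const measure_Ioo_lt_top.ne
    · refine Filter.Eventually.of_forall fun ζ => ?_
      rw [Real.norm_eq_abs, abs_of_nonneg (rho_nonneg ζ τ)]
      exact rho_le_one ζ τ
  have hpt : ∀ ζ ∈ Set.Ioo (b - r) b,
      |rho ζ τ - 1 / Real.pi * Real.sqrt (c * (b - ζ))|
        ≤ ε' * (1 / Real.pi * Real.sqrt (c * (b - ζ))) := by
    intro ζ hζ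
    have hu : 0 < b - ζ := by linarith [hζ.2]
    have hfpos : 0 < 1 / Real.pi * Real.sqrt (c * (b - ζ)) :=
      mul_pos (by positivity) (Real.sqrt_pos.2 (mul_pos hc hu))
    have h1 := hsub ⟨by linarith [hζ.1], hζ.2⟩
    simp only [Set.mem_setOf_eq] at h1
    have heq : rho ζ τ - 1 / Real.pi * Real.sqrt (c * (b - ζ))
        = (1 / Real.pi * Real.sqrt (c * (b - ζ))) *
          (rho ζ τ / (1 / Real.pi * Real.sqrt (c * (b - ζ))) - 1) := by
      field_simp
    rw [heq, abs_mul, abs_of_pos hfpos, mul_comm]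
    exact mul_le_mul_of_nonneg_right h1.le hfpos.le
  have hdiff : |(∫ ζ in Set.Ioo (b - r) b, rho ζ τ) - K * r ^ ((3 : ℝ) / 2)|
      ≤ ε' * (K * r ^ ((3 : ℝ) / 2)) := by
    rw [← hIf, ← MeasureTheory.integral_sub hint_rho hint_f]
    have h2 : |∫ ζ in Set.Ioo (b - r) b,
        (rho ζ τ - 1 / Real.pi * Real.sqrt (c * (b - ζ)))|
        ≤ ∫ ζ in Set.Ioo (b - r) b,
          |rho ζ τ - 1 / Real.pi * Real.sqrt (c * (b - ζ))| := by
      simpa [Real.norm_eq_abs] using MeasureTheory.norm_integral_le_integral_norm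
        (μ := MeasureTheory.volume.restrict (Set.Ioo (b - r) b))
        (fun ζ => rho ζ τ - 1 / Real.pi * Real.sqrt (c * (b - ζ)))
    refine h2.trans ?_
    have h3 : ∫ ζ in Set.Ioo (b - r) b,
        |rho ζ τ - 1 / Real.pi * Real.sqrt (c * (b - ζ))|
        ≤ ∫ ζ in Set.Ioo (b - r) b, ε' * (1 / Real.pi * Real.sqrt (c * (b - ζ))) :=
      MeasureTheory.setIntegral_mono_on ((hint_rho.sub hint_f).abs)
        (hint_f.const_mul ε') measurableSet_Ioo hpt
    refine h3.trans ?_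
    rw [MeasureTheory.integral_const_mul, hIf]
  have key : (∫ ζ in Set.Ioo (b - r) b, rho ζ τ) / r ^ ((3 : ℝ) / 2) - K
      = ((∫ ζ in Set.Ioo (b - r) b, rho ζ τ) - K * r ^ ((3 : ℝ) / 2)) / r ^ ((3 : ℝ) / 2) := by
    field_simp
  rw [Real.dist_eq, key, abs_div, abs_of_pos hR, div_lt_iff₀ hR]
  calc |(∫ ζ in Set.Ioo (b - r) b, rho ζ τ) - K * r ^ ((3 : ℝ) / 2)|
      ≤ ε' * (K * r ^ ((3 : ℝ) / 2)) := hdiff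
    _ = ε / 2 * r ^ ((3 : ℝ) / 2) := by
        rw [hε'def]; field_simp
    _ < ε * r ^ ((3 : ℝ) / 2) := by nlinarith
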